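/- For even N, the discrete Hilbert transform defined by the circular convolution (H_Δ u)_n = ∑_{j=0}^{N−1} c_{n−j} u_j with c_n = (2/N)·cot(πn/N) for odd n and c_n = 0 for even n, satisfies H_Δ u = F^{−1}(−i·S_even·(F u)), where S_even is multiplication by the diagonal sequence (0, 1,…,1, 0, −1,…,−1) with (N/2 − 1) ones, a zero at index N/2, and (N/2 − 1) negative ones. -/

import Mathlib

open Finset

/-- Thomée–Vasudeva Murthy's kernel for even `N`. -/
noncomputable def tvmKernel (N : ℕ) (n : ZMod N) : ℝ :=
  if Odd n.val then (2 / (N : ℝ)) * Real.cot (Real.pi * (n.val : ℝ) / (N : ℝ)) else 0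

/-- The discrete sign symbol for even `N`: `(0, 1, …, 1, 0, -1, …, -1)` with `N/2 - 1`
ones, a zero at index `N/2`, and `N/2 - 1` negative ones. -/
def sgnEven (N : ℕ) (k : ZMod N) : ℝ :=
  if k.val = 0 then 0 else if k.val < N / 2 then 1 else if k.val = N / 2 then 0 else -1

/-- The discrete Fourier transform of `u : ZMod N → ℂ`. -/
noncomputable def dft (N : ℕ) [NeZero N] (u : ZMod N → ℂ) (k : ZMod N) : ℂ :=
  ∑ n : ZMod N, u n * Complex.exp (-2 * Real.pi * Complex.I * (n.val : ℂ) * (k.val : ℂ) / (N : ℂ))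

/-- The inverse discrete Fourier transform of `v : ZMod N → ℂ`. -/
noncomputable def idft (N : ℕ) [NeZero N] (v : ZMod N → ℂ) (n : ZMod N) : ℂ :=
  (1 / (N : ℂ)) *
    ∑ k : ZMod N, v k * Complex.exp (2 * Real.pi * Complex.I * (n.val : ℂ) * (k.val : ℂ) / (N : ℂ))

lemma sum_zmod_eq_sum_range (N : ℕ) [NeZero N] (f : ℕ → ℂ) :
    ∑ k : ZMod N, f k.val = ∑ k ∈ Finset.range N, f k :=
  Finset.sum_nbij' (fun k => k.val) (fun k => (k : ZMod N))
    (fun a _ => Finset.mem_range.2 (ZMod.val_lt a))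
    (fun _ _ => Finset.mem_univ _)
    (fun a _ => ZMod.natCast_rightInverse a)
    (fun a ha => ZMod.val_cast_of_lt (Finset.mem_range.1 ha))
    (fun _ _ => rfl)

lemma exp_int_congr (N : ℕ) [NeZero N] (a b : ℤ) (h : (a : ZMod N) = (b : ZMod N)) (k : ℕ) :
    Complex.exp (2 * Real.pi * Complex.I * (a : ℂ) * (k : ℂ) / (N : ℂ))
      = Complex.exp (2 * Real.pi * Complex.I * (b : ℂ) * (k : ℂ) / (N : ℂ)) := by
  have hdvd : (N : ℤ) ∣ a - b := by
    rwa [← ZMod.intCast_zmod_eq_zero_iff_dvd, Int.cast_sub, sub_eq_zero]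
  obtain ⟨t, ht⟩ := hdvd
  have hNC : (N : ℂ) ≠ 0 := Nat.cast_ne_zero.2 (NeZero.ne N)
  have ha : (a : ℂ) = (b : ℂ) + (N : ℂ) * (t : ℂ) := by
    have h2 : (a : ℂ) - (b : ℂ) = (N : ℂ) * (t : ℂ) := by exact_mod_cast congrArg (Int.cast : ℤ → ℂ) ht
    linear_combination h2
  rw [show 2 * Real.pi * Complex.I * (a : ℂ) * (k : ℂ) / (N : ℂ)
      = 2 * Real.pi * Complex.I * (b : ℂ) * (k : ℂ) / (N : ℂ)
        + ((t * k : ℤ) : ℂ) * (2 * Real.pi * Complex.I) by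
    push_cast
    rw [ha]; field_simp]
  rw [Complex.exp_add, Complex.exp_int_mul_two_pi_mul_I, mul_one]

lemma key (N : ℕ) [NeZero N] (hN : Even N) (d : ZMod N) :
    (1 / (N : ℂ)) * ∑ k : ZMod N, -Complex.I * (sgnEven N k : ℂ) *
        Complex.exp (2 * Real.pi * Complex.I * (d.val : ℂ) * (k.val : ℂ) / (N : ℂ))
      = ((tvmKernel N d : ℝ) : ℂ) := by
  obtain ⟨M, hNM'⟩ := hN
  have hNM : N = 2 * M := by omega
  have hM : 0 < M := by have := NeZero.ne N; omega
  have hNdiv : N / 2 = M := by omega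
  have hNC : (N : ℂ) ≠ 0 := Nat.cast_ne_zero.2 (NeZero.ne N)
  set m : ℕ := d.val with hm
  have hmN : m < N := ZMod.val_lt d
  set ω : ℂ := Complex.exp (2 * Real.pi * Complex.I * (m : ℂ) / (N : ℂ)) with hω
  have hω0 : ω ≠ 0 := Complex.exp_ne_zero _
  have hsum : ∑ k : ZMod N, -Complex.I * (sgnEven N k : ℂ) *
        Complex.exp (2 * Real.pi * Complex.I * (m : ℂ) * (k.val : ℂ) / (N : ℂ))
      = ∑ k ∈ Finset.range N,
          -Complex.I * ((if k = 0 then (0:ℝ) else if k < M then 1 else if k = M then 0 else -1 : ℝ) : ℂ) * ω ^ k := by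
    rw [← sum_zmod_eq_sum_range N (fun k =>
      -Complex.I * ((if k = 0 then (0:ℝ) else if k < M then 1 else if k = M then 0 else -1 : ℝ) : ℂ) * ω ^ k)]
    refine Finset.sum_congr rfl fun k _ => ?_
    rw [sgnEven, hNdiv]
    congr 1
    rw [hω, ← Complex.exp_nat_mul]
    congr 1
    field_simp
  rw [hsum]
  have hterm : ∀ k ∈ Finset.range N,
      -Complex.I * ((if k = 0 then (0:ℝ) else if k < M then 1 else if k = M then 0 else -1 : ℝ) : ℂ) * ω ^ k
      = (if k = 0 then 0 else if k < M then -Complex.I * ω ^ k else if k = M then 0 else Complex.I * ω ^ k) := by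
    intro k _
    split_ifs <;> push_cast <;> ring
  rw [Finset.sum_congr rfl hterm]
  have hsplit : Finset.range N = Finset.Ico 0 M ∪ Finset.Ico M N := by
    rw [Finset.range_eq_Ico, Finset.Ico_union_Ico_eq_Ico (Nat.zero_le M) (by omega)]
  have hωN : ω ^ N = 1 := by
    rw [hω, ← Complex.exp_nat_mul]
    rw [show (N : ℂ) * (2 * Real.pi * Complex.I * (m : ℂ) / (N : ℂ))
        = ((m : ℤ) : ℂ) * (2 * Real.pi * Complex.I) by push_cast; field_simp]
    exact Complex.exp_int_mul_two_pi_mul_I m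
  set g : ℕ → ℂ := fun k =>
    (if k = 0 then 0 else if k < M then -Complex.I * ω ^ k else if k = M then 0 else Complex.I * ω ^ k) with hg
  have h1 : ∑ k ∈ Finset.range N, g k
      = (∑ k ∈ Finset.Ico 1 M, -Complex.I * ω ^ k) + ∑ k ∈ Finset.Ico (M+1) N, Complex.I * ω ^ k := by
    rw [hsplit, Finset.sum_union (Finset.Ico_disjoint_Ico_consecutive 0 M N)]
    congr 1
    · rw [Finset.sum_eq_sum_Ico_succ_bot hM g]
      have hg0 : g 0 = 0 := by simp [hg]
      rw [hg0, zero_add]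
      refine Finset.sum_congr rfl fun k hk => ?_
      obtain ⟨hk1, hk2⟩ := Finset.mem_Ico.1 hk
      simp only [hg]
      rw [if_neg (by omega), if_pos hk2]
    · rw [Finset.sum_eq_sum_Ico_succ_bot (by omega : M < N) g]
      have hgM : g M = 0 := by simp [hg]
      rw [hgM, zero_add]
      refine Finset.sum_congr rfl fun k hk => ?_
      obtain ⟨hk1, hk2⟩ := Finset.mem_Ico.1 hk
      simp only [hg]
      rw [if_neg (by omega), if_neg (by omega), if_neg (by omega)]
  have h2 : ∑ k ∈ Finset.Ico (M+1) N, Complex.I * ω ^ k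
      = ∑ k ∈ Finset.Ico 1 M, Complex.I * (ω⁻¹) ^ k := by
    refine Finset.sum_nbij' (fun k => N - k) (fun k => N - k)
      (fun a ha => ?_) (fun a ha => ?_) (fun a ha => ?_) (fun a ha => ?_) (fun a ha => ?_)
    · simp only [Finset.mem_Ico] at ha ⊢; omega
    · simp only [Finset.mem_Ico] at ha ⊢; omega
    · simp only [Finset.mem_Ico] at ha; show N - (N - a) = a; omega
    · simp only [Finset.mem_Ico] at ha; show N - (N - a) = a; omega
    · obtain ⟨ha1, ha2⟩ := Finset.mem_Ico.1 ha
      show Complex.I * ω ^ a = Complex.I * ω⁻¹ ^ (N - a)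
      congr 1
      rw [inv_pow]
      exact eq_inv_of_mul_eq_one_left
        (by rw [← pow_add, show a + (N - a) = N by omega, hωN])
  rw [h1, h2]
  have hA : ∑ k ∈ Finset.Ico 1 M, -Complex.I * ω ^ k
      = -Complex.I * ∑ k ∈ Finset.Ico 1 M, ω ^ k := by rw [Finset.mul_sum]
  have hB : ∑ k ∈ Finset.Ico 1 M, Complex.I * (ω⁻¹) ^ k
      = Complex.I * ∑ k ∈ Finset.Ico 1 M, (ω⁻¹) ^ k := by rw [Finset.mul_sum]
  rw [hA, hB]
  rcases Nat.eq_zero_or_pos m with hm0 | hmpos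
  · -- m = 0
    have hω1 : ω = 1 := by rw [hω, hm0]; simp
    rw [hω1]
    simp only [one_pow, inv_one]
    rw [tvmKernel, ← hm, hm0]
    simp
  · have hω1 : ω ≠ 1 := by
      rw [hω]
      intro hc
      rw [Complex.exp_eq_one_iff] at hc
      obtain ⟨t, htc⟩ := hc
      have hpi : (Real.pi : ℂ) ≠ 0 := Complex.ofReal_ne_zero.2 Real.pi_ne_zero
      have h2pi : (2 * (Real.pi : ℂ) * Complex.I) ≠ 0 := by
        simp [hpi, Complex.I_ne_zero]
      have hmc : (m : ℂ) = (t : ℂ) * (N : ℂ) := by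
        field_simp at htc
        apply mul_left_cancel₀ h2pi
        linear_combination (2 * (Real.pi : ℂ) * Complex.I) * htc
      have hmz : (m : ℤ) = t * N := by exact_mod_cast hmc
      have hNz : (0 : ℤ) < (N : ℤ) := by exact_mod_cast Nat.pos_of_ne_zero (NeZero.ne N)
      have hm1 : (1 : ℤ) ≤ (m : ℤ) := by exact_mod_cast hmpos
      have hm2 : (m : ℤ) < (N : ℤ) := by exact_mod_cast hmN
      rcases le_or_gt t 0 with ht0 | ht0
      · nlinarith
      · have : (1 : ℤ) ≤ t := ht0
        nlinarith
    have hωinv1 : ω⁻¹ ≠ 1 := fun hc => hω1 (inv_eq_one.1 hc)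
    have hωM : ω ^ M = (-1 : ℂ) ^ m := by
      rw [hω, ← Complex.exp_nat_mul]
      rw [show (M : ℂ) * (2 * Real.pi * Complex.I * (m : ℂ) / (N : ℂ))
          = (m : ℂ) * (Real.pi * Complex.I) by
        rw [show ((N : ℂ)) = 2 * (M : ℂ) by exact_mod_cast congrArg (Nat.cast : ℕ → ℂ) hNM]
        have hMC : (M : ℂ) ≠ 0 := Nat.cast_ne_zero.2 hM.ne'
        field_simp]
      rw [Complex.exp_nat_mul, Complex.exp_pi_mul_I]
    have hωinvM : (ω⁻¹) ^ M = (-1 : ℂ) ^ m := by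
      rw [inv_pow, hωM]
      rcases Nat.even_or_odd m with he | ho
      · rw [he.neg_one_pow]; simp
      · rw [ho.neg_one_pow]; norm_num
    have hgeomA : ∑ k ∈ Finset.Ico 1 M, ω ^ k = (ω ^ M - 1) / (ω - 1) - 1 := by
      have hgs := geom_sum_eq hω1 M
      rw [Finset.range_eq_Ico, Finset.sum_eq_sum_Ico_succ_bot hM (fun k => ω ^ k)] at hgs
      simp only [pow_zero] at hgs
      linear_combination hgs
    have hgeomB : ∑ k ∈ Finset.Ico 1 M, (ω⁻¹) ^ k = ((ω⁻¹) ^ M - 1) / (ω⁻¹ - 1) - 1 := by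
      have hgs := geom_sum_eq hωinv1 M
      rw [Finset.range_eq_Ico, Finset.sum_eq_sum_Ico_succ_bot hM (fun k => (ω⁻¹) ^ k)] at hgs
      simp only [pow_zero] at hgs
      linear_combination hgs
    rw [hgeomA, hgeomB, hωM, hωinvM]
    have hωm1 : ω - 1 ≠ 0 := sub_ne_zero.2 hω1
    have hωim1 : ω⁻¹ - 1 ≠ 0 := sub_ne_zero.2 hωinv1
    rcases Nat.even_or_odd m with he | ho
    · -- even case: kernel is 0
      rw [he.neg_one_pow]
      rw [tvmKernel, ← hm, if_neg (Nat.not_odd_iff_even.2 he)]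
      push_cast
      field_simp
      ring
    · -- odd case
      rw [ho.neg_one_pow]
      rw [tvmKernel, ← hm, if_pos ho]
      push_cast [Complex.ofReal_cot]
      have hexp : Complex.exp (2 * Complex.I * ((Real.pi : ℂ) * (m : ℂ) / (N : ℂ))) = ω := by
        rw [hω]; congr 1; ring
      rw [Complex.cot_eq_exp_ratio, hexp]
      have h1ω : 1 - ω ≠ 0 := fun hc => hω1 (by linear_combination -hc)
      field_simp
      ring_nf
      simp [Complex.I_sq]

theorem tvm_discreteHilbert_eq_idft_sgn_dft (N : ℕ) [NeZero N] (hN : Even N) (u : ZMod N → ℂ) :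
    (fun n => ∑ j : ZMod N, ((tvmKernel N (n - j) : ℝ) : ℂ) * u j)
      = idft N (fun k => -Complex.I * (sgnEven N k : ℂ) * dft N u k) := by
  funext n
  have hNC : (N : ℂ) ≠ 0 := Nat.cast_ne_zero.2 (NeZero.ne N)
  rw [idft]
  simp only [dft, Finset.sum_mul, Finset.mul_sum]
  rw [Finset.sum_comm]
  refine Finset.sum_congr rfl fun j _ => ?_
  have hcong : ((((n - j).val : ℕ) : ℤ) : ZMod N)
      = (Int.cast ((n.val : ℤ) - (j.val : ℤ)) : ZMod N) := by
    push_cast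
    rw [ZMod.natCast_rightInverse (n - j), ZMod.natCast_rightInverse n,
      ZMod.natCast_rightInverse j]
  have hC : ∀ x : ZMod N,
      Complex.exp (2 * Real.pi * Complex.I * (((n - j).val : ℕ) : ℂ) * (x.val : ℂ) / (N : ℂ))
      = Complex.exp (-2 * Real.pi * Complex.I * (j.val : ℂ) * (x.val : ℂ) / (N : ℂ)) *
        Complex.exp (2 * Real.pi * Complex.I * (n.val : ℂ) * (x.val : ℂ) / (N : ℂ)) := by
    intro x
    have h1 := exp_int_congr N (((n - j).val : ℕ) : ℤ) ((n.val : ℤ) - (j.val : ℤ)) hcong x.val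
    push_cast at h1
    rw [h1, ← Complex.exp_add]
    congr 1
    ring
  have hstep : ∑ x : ZMod N,
        1 / (N : ℂ) * (-Complex.I * ((sgnEven N x : ℝ) : ℂ) *
          (u j * Complex.exp (-2 * Real.pi * Complex.I * (j.val : ℂ) * (x.val : ℂ) / (N : ℂ))) *
          Complex.exp (2 * Real.pi * Complex.I * (n.val : ℂ) * (x.val : ℂ) / (N : ℂ)))
      = u j * ((1 / (N : ℂ)) * ∑ x : ZMod N, -Complex.I * ((sgnEven N x : ℝ) : ℂ) *
          Complex.exp (2 * Real.pi * Complex.I * (((n - j).val : ℕ) : ℂ) * (x.val : ℂ) / (N : ℂ))) := by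
    rw [Finset.mul_sum, Finset.mul_sum]
    refine Finset.sum_congr rfl fun x _ => ?_
    rw [hC x]
    ring
  rw [hstep, key N hN (n - j), mul_comm]
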